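/- Let t₀ ∈ ℝ and ε > 0 be such that 0 ∉ (t₀ − ε, t₀ + ε). Then the set A_{t₀,ε} = ⋃_{t ∈ (t₀−ε, t₀+ε)} [a_t] (the union of the conjugacy classes of the diagonal matrices a_t for t in this interval) is an open subset of SL(2,ℝ). -/

import Mathlib

open Matrix MeasureTheory

/-- `SL(2,ℝ)`: the group of 2×2 real matrices of determinant 1. -/
abbrev SL2 := Matrix.SpecialLinearGroup (Fin 2) ℝ

/-- The topology on `SL(2,ℝ)` is the subspace topology inherited from the
space of 2×2 real matrices. -/
instance : TopologicalSpace SL2 :=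
  TopologicalSpace.induced (fun g : SL2 => (g : Matrix (Fin 2) (Fin 2) ℝ)) inferInstance

/-- The conjugacy class `[γ] = {g γ g⁻¹ : g ∈ SL(2,ℝ)}`. -/
def conjClass (γ : SL2) : Set SL2 := {x | ∃ g : SL2, g * γ * g⁻¹ = x}

/-- The rotation matrix `k_θ = [[cos θ, −sin θ],[sin θ, cos θ]]` as an element of `SL(2,ℝ)`. -/
noncomputable def kmat (θ : ℝ) : SL2 :=
  ⟨!![Real.cos θ, -Real.sin θ; Real.sin θ, Real.cos θ], by
    simp [Matrix.det_fin_two_of]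
    nlinarith [Real.sin_sq_add_cos_sq θ]⟩

/-- The diagonal matrix `a_t = [[eᵗ, 0],[0, e⁻ᵗ]]` as an element of `SL(2,ℝ)`. -/
noncomputable def amat (t : ℝ) : SL2 :=
  ⟨!![Real.exp t, 0; 0, Real.exp (-t)], by
    simp [Matrix.det_fin_two_of, ← Real.exp_add]⟩

/-- The unipotent matrix `n_u = [[1, u],[0, 1]]` as an element of `SL(2,ℝ)`. -/
def nmat (u : ℝ) : SL2 :=
  ⟨!![1, u; 0, 1], by simp [Matrix.det_fin_two_of]⟩

/-- The trace, as a function on SL2. -/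
noncomputable def trace2 (g : SL2) : ℝ :=
  (g : Matrix (Fin 2) (Fin 2) ℝ) 0 0 + (g : Matrix (Fin 2) (Fin 2) ℝ) 1 1

lemma trace2_eq (g : SL2) : trace2 g = Matrix.trace (g : Matrix (Fin 2) (Fin 2) ℝ) :=
  (Matrix.trace_fin_two _).symm

lemma continuous_trace2 : Continuous trace2 := by
  have h0 : Continuous (fun g : SL2 => (g : Matrix (Fin 2) (Fin 2) ℝ)) :=
    continuous_induced_dom
  exact ((continuous_apply (0 : Fin 2)).comp
      ((continuous_apply (0 : Fin 2)).comp h0)).add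
    ((continuous_apply (1 : Fin 2)).comp ((continuous_apply (1 : Fin 2)).comp h0))

lemma trace2_conj {γ x : SL2} (hx : x ∈ conjClass γ) : trace2 x = trace2 γ := by
  obtain ⟨g, rfl⟩ := hx
  rw [trace2_eq, trace2_eq]
  rw [Matrix.SpecialLinearGroup.coe_mul, Matrix.SpecialLinearGroup.coe_mul,
    Matrix.trace_mul_comm, ← mul_assoc, ← Matrix.SpecialLinearGroup.coe_mul,
    inv_mul_cancel, Matrix.SpecialLinearGroup.coe_one, one_mul]

lemma mem_conjClass_of_comm {γ x P : SL2} (h : P * γ = x * P) : x ∈ conjClass γ :=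
  ⟨P, by rw [h, mul_inv_cancel_right]⟩

lemma mem_conjClass_amat {g : SL2} {t : ℝ} (ht : t ≠ 0)
    (htr : trace2 g = Real.exp t + Real.exp (-t)) : g ∈ conjClass (amat t) := by
  set L := Real.exp t with hL
  set M := Real.exp (-t) with hM
  have hLM : L * M = 1 := by rw [hL, hM, ← Real.exp_add]; simp
  have hne : L ≠ M := by
    intro hEq
    rw [hL, hM, Real.exp_eq_exp] at hEq
    exact ht (by linarith)
  set a := (g : Matrix (Fin 2) (Fin 2) ℝ) 0 0 with ha
  set b := (g : Matrix (Fin 2) (Fin 2) ℝ) 0 1 with hb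
  set c := (g : Matrix (Fin 2) (Fin 2) ℝ) 1 0 with hc
  set d := (g : Matrix (Fin 2) (Fin 2) ℝ) 1 1 with hd
  have hdet : a * d - b * c = 1 := by
    have := g.2
    rw [Matrix.det_fin_two] at this
    exact this
  have hsum : a + d = L + M := htr
  have hg : (g : Matrix (Fin 2) (Fin 2) ℝ) = !![a, b; c, d] := by
    rw [ha, hb, hc, hd]; exact Matrix.eta_fin_two _
  have hamat : ((amat t : SL2) : Matrix (Fin 2) (Fin 2) ℝ) = !![L, 0; 0, M] := rfl
  by_cases hb0 : b ≠ 0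
  · set D := b * (M - L) with hD
    have hD0 : D ≠ 0 := mul_ne_zero hb0 (sub_ne_zero.mpr (Ne.symm hne))
    have hPdet : Matrix.det !![b / D, b; (L - a) / D, M - a] = 1 := by
      rw [Matrix.det_fin_two_of]; field_simp; ring
    apply mem_conjClass_of_comm (P := ⟨_, hPdet⟩)
    apply Subtype.ext
    show !![b / D, b; (L - a) / D, M - a] * ((amat t : SL2) : Matrix (Fin 2) (Fin 2) ℝ)
        = (g : Matrix (Fin 2) (Fin 2) ℝ) * !![b / D, b; (L - a) / D, M - a]
    rw [hamat, hg]
    ext i j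
    fin_cases i <;> fin_cases j
    · simp [Matrix.mul_apply, Fin.sum_univ_two]
      ring
    · simp [Matrix.mul_apply, Fin.sum_univ_two]
      ring
    · simp [Matrix.mul_apply, Fin.sum_univ_two]
      linear_combination ((-L) * hsum + hdet - hLM) / D
    · simp [Matrix.mul_apply, Fin.sum_univ_two]
      linear_combination (-M) * hsum + hdet - hLM
  · push_neg at hb0
    by_cases hc0 : c ≠ 0
    · set D := c * (L - M) with hD
      have hD0 : D ≠ 0 := mul_ne_zero hc0 (sub_ne_zero.mpr hne)
      have hPdet : Matrix.det !![(L - d) / D, M - d; c / D, c] = 1 := by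
        rw [Matrix.det_fin_two_of]; field_simp; ring
      apply mem_conjClass_of_comm (P := ⟨_, hPdet⟩)
      apply Subtype.ext
      show !![(L - d) / D, M - d; c / D, c] * ((amat t : SL2) : Matrix (Fin 2) (Fin 2) ℝ)
          = (g : Matrix (Fin 2) (Fin 2) ℝ) * !![(L - d) / D, M - d; c / D, c]
      rw [hamat, hg]
      ext i j
      fin_cases i <;> fin_cases j
      · simp [Matrix.mul_apply, Fin.sum_univ_two]
        linear_combination ((-L) * hsum + hdet - hLM) / D
      · simp [Matrix.mul_apply, Fin.sum_univ_two]
        linear_combination (-M) * hsum + hdet - hLM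
      · simp [Matrix.mul_apply, Fin.sum_univ_two]
        ring
      · simp [Matrix.mul_apply, Fin.sum_univ_two]
        ring
    · push_neg at hc0
      have haLM : (a - L) * (a - M) = 0 := by
        have had : a * d = 1 := by rw [← hdet, hb0, hc0]; ring
        linear_combination a * hsum + hLM - had
      rcases mul_eq_zero.mp haLM with h1 | h1
      · have haL : a = L := by linarith
        have hdM : d = M := by linarith
        refine mem_conjClass_of_comm (P := 1) ?_
        rw [one_mul, mul_one]
        apply Subtype.ext
        rw [hamat, hg, haL, hdM, hb0, hc0]
      · have haM : a = M := by linarith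
        have hdL : d = L := by linarith
        have hPdet : Matrix.det !![(0 : ℝ), -1; 1, 0] = 1 := by
          rw [Matrix.det_fin_two_of]; ring
        apply mem_conjClass_of_comm (P := ⟨_, hPdet⟩)
        apply Subtype.ext
        show !![(0 : ℝ), -1; 1, 0] * ((amat t : SL2) : Matrix (Fin 2) (Fin 2) ℝ)
            = (g : Matrix (Fin 2) (Fin 2) ℝ) * !![(0 : ℝ), -1; 1, 0]
        rw [hamat, hg, haM, hdL, hb0, hc0]
        ext i j
        fin_cases i <;> fin_cases j <;> simp [Matrix.mul_apply, Fin.sum_univ_two]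

lemma trace2_amat (t : ℝ) : trace2 (amat t) = Real.exp t + Real.exp (-t) := by
  simp [trace2, amat]

/-- If 0 ∉ (t₀ − ε, t₀ + ε), then the union of the conjugacy classes of the diagonal
matrices a_t, t in this interval, is open in SL(2,ℝ). -/
theorem isOpen_union_conjClass_amat (t₀ ε : ℝ) (hε : 0 < ε)
    (h : (0 : ℝ) ∉ Set.Ioo (t₀ - ε) (t₀ + ε)) :
    IsOpen (⋃ t ∈ Set.Ioo (t₀ - ε) (t₀ + ε), conjClass (amat t)) := by
  have hI : t₀ - ε < t₀ + ε := by linarith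
  set f : ℝ → ℝ := fun t => Real.exp t + Real.exp (-t) with hf
  have hcont : Continuous f := by
    exact Real.continuous_exp.add (Real.continuous_exp.comp continuous_neg)
  have hderiv : ∀ x : ℝ, HasDerivAt f (Real.exp x - Real.exp (-x)) x := by
    intro x
    have h1 := Real.hasDerivAt_exp x
    have h2 : HasDerivAt (fun y : ℝ => Real.exp (-y)) (-Real.exp (-x)) x := by
      have h3 := (Real.hasDerivAt_exp (-x)).comp x (hasDerivAt_neg x)
      simp only [mul_neg, mul_one] at h3
      exact h3
    have h4 := h1.add h2
    rw [← sub_eq_add_neg] at h4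
    exact h4
  have key : (⋃ t ∈ Set.Ioo (t₀ - ε) (t₀ + ε), conjClass (amat t))
      = trace2 ⁻¹' (f '' Set.Ioo (t₀ - ε) (t₀ + ε)) := by
    ext g
    simp only [Set.mem_iUnion, Set.mem_preimage, Set.mem_image]
    constructor
    · rintro ⟨t, ht, hg⟩
      exact ⟨t, ht, by rw [trace2_conj hg, trace2_amat]⟩
    · rintro ⟨t, ht, hft⟩
      have ht0 : t ≠ 0 := by
        rintro rfl
        exact h (by simpa using ht)
      exact ⟨t, ht, mem_conjClass_amat ht0 hft.symm⟩
  rw [key]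
  apply continuous_trace2.isOpen_preimage
  have hcase : t₀ + ε ≤ 0 ∨ 0 ≤ t₀ - ε := by
    by_contra hc
    push_neg at hc
    exact h ⟨by linarith [hc.2], by linarith [hc.1]⟩
  rcases hcase with hneg | hpos
  · -- interval is negative; f is strictly antitone on Iic 0
    have hanti : StrictAntiOn f (Set.Iic 0) := by
      apply strictAntiOn_of_deriv_neg (convex_Iic 0) hcont.continuousOn
      intro x hx
      rw [interior_Iic] at hx
      rw [(hderiv x).deriv]
      have : Real.exp x < Real.exp (-x) := Real.exp_lt_exp.mpr (by linarith [hx.out])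
      linarith
    have himg : f '' Set.Ioo (t₀ - ε) (t₀ + ε) = Set.Ioo (f (t₀ + ε)) (f (t₀ - ε)) := by
      apply Set.Subset.antisymm
      · rintro x ⟨s, ⟨hs1, hs2⟩, rfl⟩
        exact ⟨hanti (by simp; linarith : s ∈ Set.Iic 0)
            (by simp; linarith : (t₀ + ε) ∈ Set.Iic 0) hs2,
          hanti (by simp; linarith : (t₀ - ε) ∈ Set.Iic 0)
            (by simp; linarith : s ∈ Set.Iic 0) hs1⟩
      · exact intermediate_value_Ioo' (le_of_lt hI) hcont.continuousOn
    rw [himg]; exact isOpen_Ioo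
  · have hmono : StrictMonoOn f (Set.Ici 0) := by
      apply strictMonoOn_of_deriv_pos (convex_Ici 0) hcont.continuousOn
      intro x hx
      rw [interior_Ici] at hx
      rw [(hderiv x).deriv]
      have : Real.exp (-x) < Real.exp x := Real.exp_lt_exp.mpr (by linarith [hx.out])
      linarith
    have himg : f '' Set.Ioo (t₀ - ε) (t₀ + ε) = Set.Ioo (f (t₀ - ε)) (f (t₀ + ε)) := by
      apply Set.Subset.antisymm
      · rintro x ⟨s, ⟨hs1, hs2⟩, rfl⟩
        exact ⟨hmono (by simp; linarith : (t₀ - ε) ∈ Set.Ici 0)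
            (by simp; linarith : s ∈ Set.Ici 0) hs1,
          hmono (by simp; linarith : s ∈ Set.Ici 0)
            (by simp; linarith : (t₀ + ε) ∈ Set.Ici 0) hs2⟩
      · exact intermediate_value_Ioo (le_of_lt hI) hcont.continuousOn
    rw [himg]; exact isOpen_Ioo
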